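/- arXiv:1606.07362 — 3 statements merged into one kernel-verified Lean document; each statement's English description precedes it below -/
import Mathlib

section
/- If G is a game under misère play such that o⁻(G + X) = o⁻(X) for all games X (i.e., G is equivalent to 0 in the universe of all games), then G is identical to the zero game {·|·}. -/
namespace SetTheory

universe u

/-- Pre-games, as in the older Mathlib (`SetTheory.PGame`), removed since. -/
inductive PGame : Type (u + 1)
  | mk : ∀ α β : Type u, (α → PGame) → (β → PGame) → PGame

namespace PGame

/-- The indexing type for allowable moves by Left. -/
def LeftMoves : PGame → Type u
  | mk l _ _ _ => l

/-- The indexing type for allowable moves by Right. -/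
def RightMoves : PGame → Type u
  | mk _ r _ _ => r

/-- The new game after Left makes an allowed move. -/
def moveLeft : ∀ g : PGame, LeftMoves g → PGame
  | mk _l _ L _ => L

/-- The new game after Right makes an allowed move. -/
def moveRight : ∀ g : PGame, RightMoves g → PGame
  | mk _ _r _ R => R

/-- `IsOption x y` means that `x` is either a left or right option for `y`. -/
inductive IsOption : PGame → PGame → Prop
  | moveLeft {x : PGame} (i : x.LeftMoves) : IsOption (x.moveLeft i) x
  | moveRight {x : PGame} (i : x.RightMoves) : IsOption (x.moveRight i) x

/-- `Subsequent x y` says that `x` can be obtained by playing some nonempty sequence of moves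
from `y`. -/
def Subsequent : PGame → PGame → Prop :=
  Relation.TransGen IsOption

/-- The sum of `x = {xL | xR}` and `y = {yL | yR}` is `{xL + y, x + yL | xR + y, x + yR}`. -/
noncomputable instance : Add PGame.{u} :=
  ⟨fun x y => by
    induction x generalizing y with | mk xl xr _ _ IHxl IHxr => _
    induction y with | mk yl yr yL yR IHyl IHyr => _
    have y := mk yl yr yL yR
    refine ⟨xl ⊕ yl, xr ⊕ yr, Sum.rec ?_ ?_, Sum.rec ?_ ?_⟩
    · exact fun i => IHxl i y
    · exact IHyl
    · exact fun i => IHxr i y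
    · exact IHyr⟩

end PGame

end SetTheory

open SetTheory

namespace Misere

/-- Misère winning: `(wins G).1` means Left, moving first on `G`, wins under misère play;
`(wins G).2` means Right, moving first, wins. The player unable to move wins. -/
def wins : PGame → Prop × Prop
  | ⟨α, β, L, R⟩ =>
    (IsEmpty α ∨ ∃ i, ¬ (wins (L i)).2,
     IsEmpty β ∨ ∃ j, ¬ (wins (R j)).1)

/-- Left wins moving first under misère play. -/
def LeftFirst (G : PGame) : Prop := (wins G).1

/-- Right wins moving first under misère play. -/
def RightFirst (G : PGame) : Prop := (wins G).2

/-- Normal-play winning: `(nwins G).1` means Left moving first wins (player unable to move loses). -/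
def nwins : PGame → Prop × Prop
  | ⟨α, β, L, R⟩ =>
    (∃ i, ¬ (nwins (L i)).2,
     ∃ j, ¬ (nwins (R j)).1)

/-- Outcome classes. -/
inductive Outcome : Type
  | L | R | N | P
  deriving DecidableEq

/-- The partial order on outcomes: L > P > R, L > N > R, with P and N incomparable. -/
instance : LE Outcome := ⟨fun a b => a = b ∨ a = .R ∨ b = .L⟩

open Classical in
/-- The misère outcome of a game. -/
noncomputable def misereOutcome (G : PGame) : Outcome :=
  if (wins G).1 then (if (wins G).2 then .N else .L)
  else (if (wins G).2 then .R else .P)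

open Classical in
/-- The normal-play outcome of a game. -/
noncomputable def normalOutcome (G : PGame) : Outcome :=
  if (nwins G).1 then (if (nwins G).2 then .N else .L)
  else (if (nwins G).2 then .R else .P)

/-- A game is dicot if every subposition has a Left option iff it has a Right option. -/
def Dicot : PGame → Prop
  | ⟨α, β, L, R⟩ => (IsEmpty α ↔ IsEmpty β) ∧ (∀ i, Dicot (L i)) ∧ (∀ j, Dicot (R j))

/-- A dead Left end: a Left end all of whose followers are Left ends. -/
def DeadLeftEnd : PGame → Prop
  | ⟨α, _β, _L, R⟩ => IsEmpty α ∧ ∀ j, DeadLeftEnd (R j)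

/-- A dead Right end: a Right end all of whose followers are Right ends. -/
def DeadRightEnd : PGame → Prop
  | ⟨_α, β, L, _R⟩ => IsEmpty β ∧ ∀ i, DeadRightEnd (L i)

/-- A follower of `G` is any position reachable from `G`, including `G` itself. -/
def Follower (H G : PGame) : Prop := H = G ∨ PGame.Subsequent H G

/-- An end: a position where some player has no move. -/
def IsEnd (G : PGame) : Prop := IsEmpty G.LeftMoves ∨ IsEmpty G.RightMoves

/-- A game is dead-ending if every one of its end followers is a dead end. -/
def DeadEnding (G : PGame) : Prop :=
  ∀ H, Follower H G → IsEnd H → (DeadLeftEnd H ∨ DeadRightEnd H)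

end Misere


namespace SetTheory.PGame

universe v

instance : Zero PGame.{v} := ⟨mk PEmpty PEmpty PEmpty.elim PEmpty.elim⟩

def leftMovesAdd : ∀ x y : PGame.{v}, (x + y).LeftMoves ≃ x.LeftMoves ⊕ y.LeftMoves
  | ⟨_, _, _, _⟩, ⟨_, _, _, _⟩ => Equiv.refl _

def rightMovesAdd : ∀ x y : PGame.{v}, (x + y).RightMoves ≃ x.RightMoves ⊕ y.RightMoves
  | ⟨_, _, _, _⟩, ⟨_, _, _, _⟩ => Equiv.refl _

def toLeftMovesAdd {x y : PGame.{v}} : x.LeftMoves ⊕ y.LeftMoves ≃ (x + y).LeftMoves :=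
  (leftMovesAdd x y).symm

def toRightMovesAdd {x y : PGame.{v}} : x.RightMoves ⊕ y.RightMoves ≃ (x + y).RightMoves :=
  (rightMovesAdd x y).symm

theorem add_moveLeft_inl {x : PGame.{v}} (y : PGame.{v}) (i : x.LeftMoves) :
    (x + y).moveLeft (toLeftMovesAdd (Sum.inl i)) = x.moveLeft i + y := by
  cases x; cases y; rfl

theorem add_moveLeft_inr (x : PGame.{v}) {y : PGame.{v}} (i : y.LeftMoves) :
    (x + y).moveLeft (toLeftMovesAdd (Sum.inr i)) = x + y.moveLeft i := by
  cases x; cases y; rfl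

theorem add_moveRight_inl {x : PGame.{v}} (y : PGame.{v}) (i : x.RightMoves) :
    (x + y).moveRight (toRightMovesAdd (Sum.inl i)) = x.moveRight i + y := by
  cases x; cases y; rfl

theorem add_moveRight_inr (x : PGame.{v}) {y : PGame.{v}} (i : y.RightMoves) :
    (x + y).moveRight (toRightMovesAdd (Sum.inr i)) = x + y.moveRight i := by
  cases x; cases y; rfl

theorem leftMoves_add_cases {x y : PGame.{v}} (k) {P : (x + y).LeftMoves → Prop}
    (hl : ∀ i, P (toLeftMovesAdd (Sum.inl i))) (hr : ∀ i, P (toLeftMovesAdd (Sum.inr i))) :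
    P k := by
  rw [← toLeftMovesAdd.apply_symm_apply k]
  rcases toLeftMovesAdd.symm k with i | i
  · exact hl i
  · exact hr i

theorem rightMoves_add_cases {x y : PGame.{v}} (k) {P : (x + y).RightMoves → Prop}
    (hl : ∀ i, P (toRightMovesAdd (Sum.inl i))) (hr : ∀ i, P (toRightMovesAdd (Sum.inr i))) :
    P k := by
  rw [← toRightMovesAdd.apply_symm_apply k]
  rcases toRightMovesAdd.symm k with i | i
  · exact hl i
  · exact hr i

instance isEmpty_leftMoves_add (x y : PGame.{v}) [IsEmpty x.LeftMoves] [IsEmpty y.LeftMoves] :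
    IsEmpty (x + y).LeftMoves :=
  (leftMovesAdd x y).isEmpty

instance isEmpty_rightMoves_add (x y : PGame.{v}) [IsEmpty x.RightMoves] [IsEmpty y.RightMoves] :
    IsEmpty (x + y).RightMoves :=
  (rightMovesAdd x y).isEmpty

@[elab_as_elim]
noncomputable def moveRecOn {C : PGame.{v} → Sort*} (x : PGame.{v})
    (IH : ∀ y : PGame.{v}, (∀ i, C (y.moveLeft i)) → (∀ j, C (y.moveRight j)) → C y) : C x :=
  x.rec (fun yl yr yL yR IHl IHr => IH (mk yl yr yL yR) IHl IHr)

end SetTheory.PGame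


namespace Misere

open SetTheory PGame

theorem leftFirst_iff (G : PGame) :
    LeftFirst G ↔ IsEmpty G.LeftMoves ∨ ∃ i, ¬ RightFirst (G.moveLeft i) := by
  cases G
  exact Iff.rfl

theorem rightFirst_iff (G : PGame) :
    RightFirst G ↔ IsEmpty G.RightMoves ∨ ∃ j, ¬ LeftFirst (G.moveRight j) := by
  cases G
  exact Iff.rfl

theorem leftFirst_of_isEmpty {G : PGame} (h : IsEmpty G.LeftMoves) : LeftFirst G :=
  (leftFirst_iff G).2 (Or.inl h)

theorem rightFirst_of_isEmpty {G : PGame} (h : IsEmpty G.RightMoves) : RightFirst G :=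
  (rightFirst_iff G).2 (Or.inl h)

theorem leftFirst_add_right {x y : PGame} (i : y.LeftMoves)
    (h : ¬ RightFirst (x + y.moveLeft i)) : LeftFirst (x + y) :=
  (leftFirst_iff _).2 (Or.inr ⟨toLeftMovesAdd (Sum.inr i), by rwa [add_moveLeft_inr]⟩)

theorem leftFirst_add_left {x y : PGame} (i : x.LeftMoves)
    (h : ¬ RightFirst (x.moveLeft i + y)) : LeftFirst (x + y) :=
  (leftFirst_iff _).2 (Or.inr ⟨toLeftMovesAdd (Sum.inl i), by rwa [add_moveLeft_inl]⟩)

theorem rightFirst_add_right {x y : PGame} (j : y.RightMoves)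
    (h : ¬ LeftFirst (x + y.moveRight j)) : RightFirst (x + y) :=
  (rightFirst_iff _).2 (Or.inr ⟨toRightMovesAdd (Sum.inr j), by rwa [add_moveRight_inr]⟩)

theorem rightFirst_add_left {x y : PGame} (j : x.RightMoves)
    (h : ¬ LeftFirst (x.moveRight j + y)) : RightFirst (x + y) :=
  (rightFirst_iff _).2 (Or.inr ⟨toRightMovesAdd (Sum.inl j), by rwa [add_moveRight_inl]⟩)

theorem not_leftFirst_add {x y : PGame} (hne : Nonempty (x + y).LeftMoves)
    (h1 : ∀ i, RightFirst (x.moveLeft i + y)) (h2 : ∀ i, RightFirst (x + y.moveLeft i)) :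
    ¬ LeftFirst (x + y) := by
  rw [leftFirst_iff]
  rintro (he | ⟨k, hk⟩)
  · exact he.false hne.some
  · exact leftMoves_add_cases (P := fun k => ¬ RightFirst ((x + y).moveLeft k) → False) k
      (fun i hh => hh (by rw [add_moveLeft_inl]; exact h1 i))
      (fun i hh => hh (by rw [add_moveLeft_inr]; exact h2 i)) hk

theorem not_rightFirst_add {x y : PGame} (hne : Nonempty (x + y).RightMoves)
    (h1 : ∀ j, LeftFirst (x.moveRight j + y)) (h2 : ∀ j, LeftFirst (x + y.moveRight j)) :
    ¬ RightFirst (x + y) := by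
  rw [rightFirst_iff]
  rintro (he | ⟨k, hk⟩)
  · exact he.false hne.some
  · exact rightMoves_add_cases (P := fun k => ¬ LeftFirst ((x + y).moveRight k) → False) k
      (fun j hh => hh (by rw [add_moveRight_inl]; exact h1 j))
      (fun j hh => hh (by rw [add_moveRight_inr]; exact h2 j)) hk

universe u

/-- The misère adjoint of a game. -/
noncomputable def adj (x : PGame.{u}) : PGame.{u} :=
  PGame.rec (motive := fun _ => PGame.{u})
    (fun α β _L _R IHL IHR =>
      ⟨β ⊕ ULift.{u} (PLift (IsEmpty β)), α ⊕ ULift.{u} (PLift (IsEmpty α)),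
        Sum.elim IHR (fun _ => 0), Sum.elim IHL (fun _ => 0)⟩) x

theorem adj_leftMoves_nonempty (G : PGame) : Nonempty (adj G).LeftMoves := by
  cases G with
  | mk α β L R =>
    by_cases hb : IsEmpty β
    · exact ⟨Sum.inr ⟨⟨hb⟩⟩⟩
    · exact ⟨Sum.inl (not_isEmpty_iff.mp hb).some⟩

theorem adj_rightMoves_nonempty (G : PGame) : Nonempty (adj G).RightMoves := by
  cases G with
  | mk α β L R =>
    by_cases ha : IsEmpty α
    · exact ⟨Sum.inr ⟨⟨ha⟩⟩⟩
    · exact ⟨Sum.inl (not_isEmpty_iff.mp ha).some⟩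

def adjLIdx : ∀ (G : PGame), G.RightMoves → (adj G).LeftMoves
  | ⟨_, _, _, _⟩, j => Sum.inl j

def adjRIdx : ∀ (G : PGame), G.LeftMoves → (adj G).RightMoves
  | ⟨_, _, _, _⟩, i => Sum.inl i

theorem adjLIdx_move : ∀ (G : PGame) (j : G.RightMoves),
    (adj G).moveLeft (adjLIdx G j) = adj (G.moveRight j)
  | ⟨_, _, _, _⟩, _ => rfl

theorem adjRIdx_move : ∀ (G : PGame) (i : G.LeftMoves),
    (adj G).moveRight (adjRIdx G i) = adj (G.moveLeft i)
  | ⟨_, _, _, _⟩, _ => rfl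

theorem adj_left_cases (G : PGame) {P : PGame → Prop}
    (h1 : ∀ j, P (adj (G.moveRight j))) (h2 : IsEmpty G.RightMoves → P 0) :
    ∀ k, P ((adj G).moveLeft k) := by
  cases G with
  | mk α β L R =>
    rintro (j | ⟨⟨⟨hb⟩⟩⟩)
    · exact h1 j
    · exact h2 hb

theorem adj_right_cases (G : PGame) {P : PGame → Prop}
    (h1 : ∀ i, P (adj (G.moveLeft i))) (h2 : IsEmpty G.LeftMoves → P 0) :
    ∀ k, P ((adj G).moveRight k) := by
  cases G with
  | mk α β L R =>
    rintro (i | ⟨⟨⟨ha⟩⟩⟩)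
    · exact h1 i
    · exact h2 ha

theorem adj_good (H : PGame) : ¬ LeftFirst (H + adj H) ∧ ¬ RightFirst (H + adj H) := by
  induction H using PGame.moveRecOn with
  | _ H IHL IHR =>
    constructor
    · refine not_leftFirst_add ⟨toLeftMovesAdd (Sum.inr (adj_leftMoves_nonempty H).some)⟩ ?_ ?_
      · intro i
        exact rightFirst_add_right (adjRIdx H i)
          (by rw [adjRIdx_move]; exact (IHL i).1)
      · exact adj_left_cases H (P := fun Z => RightFirst (H + Z))
          (fun j => rightFirst_add_left j (IHR j).1)
          (fun hb => rightFirst_of_isEmpty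
            (by haveI := hb
                haveI : IsEmpty ((0 : PGame)).RightMoves := inferInstanceAs (IsEmpty PEmpty)
                exact inferInstanceAs (IsEmpty (H + 0).RightMoves)))
    · refine not_rightFirst_add ⟨toRightMovesAdd (Sum.inr (adj_rightMoves_nonempty H).some)⟩ ?_ ?_
      · intro j
        exact leftFirst_add_right (adjLIdx H j)
          (by rw [adjLIdx_move]; exact (IHR j).2)
      · exact adj_right_cases H (P := fun Z => LeftFirst (H + Z))
          (fun i => leftFirst_add_left i (IHL i).2)
          (fun ha => leftFirst_of_isEmpty
            (by haveI := ha
                haveI : IsEmpty ((0 : PGame)).LeftMoves := inferInstanceAs (IsEmpty PEmpty)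
                exact inferInstanceAs (IsEmpty (H + 0).LeftMoves)))

theorem outcome_eq_L {G : PGame} (h1 : (wins G).1) (h2 : ¬ (wins G).2) :
    misereOutcome G = Outcome.L := by
  unfold misereOutcome
  rw [if_pos h1, if_neg h2]

theorem outcome_eq_R {G : PGame} (h1 : ¬ (wins G).1) (h2 : (wins G).2) :
    misereOutcome G = Outcome.R := by
  unfold misereOutcome
  rw [if_neg h1, if_pos h2]

theorem outcome_ne_L {G : PGame} (h2 : (wins G).2) : misereOutcome G ≠ Outcome.L := by
  unfold misereOutcome
  by_cases h1 : (wins G).1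
  · rw [if_pos h1, if_pos h2]; simp
  · rw [if_neg h1, if_pos h2]; simp

theorem outcome_ne_R {G : PGame} (h1 : (wins G).1) : misereOutcome G ≠ Outcome.R := by
  unfold misereOutcome
  rw [if_pos h1]
  by_cases h2 : (wins G).2
  · rw [if_pos h2]; simp
  · rw [if_neg h2]; simp

end Misere

open Misere in
/-- the only game equivalent to 0 modulo all games under misère play is
(a game identical in form to) the zero game {·|·}. -/
theorem eq_zero_iff_zero (G : PGame)
    (h : ∀ X : PGame, misereOutcome (G + X) = misereOutcome X) :
    IsEmpty G.LeftMoves ∧ IsEmpty G.RightMoves := by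
  constructor
  · by_contra hne
    obtain ⟨i₀⟩ := not_isEmpty_iff.mp hne
    set Y : PGame := PGame.mk PEmpty G.LeftMoves PEmpty.elim (fun i => adj (G.moveLeft i))
      with hYdef
    set X : PGame := PGame.mk PEmpty PUnit PEmpty.elim (fun _ => Y) with hXdef
    have hYL : LeftFirst Y := leftFirst_of_isEmpty (inferInstanceAs (IsEmpty PEmpty))
    have hoX : misereOutcome X = Outcome.L := by
      apply outcome_eq_L
      · exact leftFirst_of_isEmpty (inferInstanceAs (IsEmpty PEmpty))
      · intro hRF
        rcases (rightFirst_iff X).1 hRF with he | ⟨j, hj⟩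
        · exact he.false PUnit.unit
        · exact hj hYL
    have hGY : ¬ LeftFirst (G + Y) := by
      apply not_leftFirst_add ⟨PGame.toLeftMovesAdd (Sum.inl i₀)⟩
      · intro i
        exact rightFirst_add_right (y := Y) i (adj_good (G.moveLeft i)).1
      · intro i
        exact PEmpty.elim i
    have hGX : RightFirst (G + X) := rightFirst_add_right (y := X) PUnit.unit hGY
    have hco := h X
    rw [hoX] at hco
    exact outcome_ne_L hGX hco
  · by_contra hne
    obtain ⟨j₀⟩ := not_isEmpty_iff.mp hne
    set Y : PGame := PGame.mk G.RightMoves PEmpty (fun j => adj (G.moveRight j)) PEmpty.elim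
      with hYdef
    set X : PGame := PGame.mk PUnit PEmpty (fun _ => Y) PEmpty.elim with hXdef
    have hYR : RightFirst Y := rightFirst_of_isEmpty (inferInstanceAs (IsEmpty PEmpty))
    have hoX : misereOutcome X = Outcome.R := by
      apply outcome_eq_R
      · intro hLF
        rcases (leftFirst_iff X).1 hLF with he | ⟨i, hi⟩
        · exact he.false PUnit.unit
        · exact hi hYR
      · exact rightFirst_of_isEmpty (inferInstanceAs (IsEmpty PEmpty))
    have hGY : ¬ RightFirst (G + Y) := by
      apply not_rightFirst_add ⟨PGame.toRightMovesAdd (Sum.inl j₀)⟩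
      · intro j
        exact leftFirst_add_right (y := Y) j (adj_good (G.moveRight j)).2
      · intro j
        exact PEmpty.elim j
    have hGX : LeftFirst (G + X) := leftFirst_add_right (y := X) PUnit.unit hGY
    have hco := h X
    rw [hoX] at hco
    exact outcome_ne_R hGX hco
end

section
/- Hand-tying principle for misère play: if G and H are games with H^L nonempty, G^R = H^R, and H^L ⊆ G^L (G is obtained from H by adding extra Left options to an already nonempty set of Left options), then G ≥ H under misère play, i.e., o⁻(G + X) ≥ o⁻(H + X) for all games X. -/
open SetTheory

universe u in
lemma Misere.wins_def {a b : Type u} (L : a → PGame.{u}) (R : b → PGame.{u}) :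
    wins (PGame.mk a b L R) =
      (IsEmpty a ∨ ∃ i, ¬ (wins (L i)).2, IsEmpty b ∨ ∃ j, ¬ (wins (R j)).1) := by
  rw [wins]

lemma Misere.outcome_le {G H : PGame} (h1 : (wins G).1 → (wins H).1)
    (h2 : (wins H).2 → (wins G).2) : misereOutcome G ≤ misereOutcome H := by
  unfold misereOutcome
  by_cases a : (wins G).1 <;> by_cases b : (wins G).2 <;>
    by_cases c : (wins H).1 <;> by_cases d : (wins H).2 <;>
    simp_all [LE.le] <;> tauto

open Misere in
universe u in
theorem hand_tying' {α β γ : Type u} (L : α → PGame.{u}) (L' : γ → PGame.{u}) (R : β → PGame.{u})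
    (hα : Nonempty α) :
    ∀ X : PGame,
      ((wins (PGame.mk α β L R + X)).1 →
        (wins (PGame.mk (α ⊕ γ) β (Sum.elim L L') R + X)).1) ∧
      ((wins (PGame.mk (α ⊕ γ) β (Sum.elim L L') R + X)).2 →
        (wins (PGame.mk α β L R + X)).2) := by
  intro X
  induction X with
  | mk xl xr xL xR IHL IHR =>
    constructor
    · intro h
      rw [show (PGame.mk α β L R + PGame.mk xl xr xL xR) = PGame.mk (α ⊕ xl) (β ⊕ xr)
          (Sum.rec (fun i => L i + PGame.mk xl xr xL xR) (fun i => PGame.mk α β L R + xL i))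
          (Sum.rec (fun j => R j + PGame.mk xl xr xL xR) (fun j => PGame.mk α β L R + xR j))
          from rfl, Misere.wins_def] at h
      rw [show (PGame.mk (α ⊕ γ) β (Sum.elim L L') R + PGame.mk xl xr xL xR) =
          PGame.mk ((α ⊕ γ) ⊕ xl) (β ⊕ xr)
          (Sum.rec (fun i => Sum.elim L L' i + PGame.mk xl xr xL xR)
            (fun i => PGame.mk (α ⊕ γ) β (Sum.elim L L') R + xL i))
          (Sum.rec (fun j => R j + PGame.mk xl xr xL xR)
            (fun j => PGame.mk (α ⊕ γ) β (Sum.elim L L') R + xR j)) from rfl,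
          Misere.wins_def]
      rcases h with h | ⟨i, hi⟩
      · exact (h.false (Sum.inl hα.some)).elim
      · rcases i with i | i
        · exact Or.inr ⟨Sum.inl (Sum.inl i), hi⟩
        · exact Or.inr ⟨Sum.inr i, fun hw => hi ((IHL i).2 hw)⟩
    · intro h
      rw [show (PGame.mk (α ⊕ γ) β (Sum.elim L L') R + PGame.mk xl xr xL xR) =
          PGame.mk ((α ⊕ γ) ⊕ xl) (β ⊕ xr)
          (Sum.rec (fun i => Sum.elim L L' i + PGame.mk xl xr xL xR)
            (fun i => PGame.mk (α ⊕ γ) β (Sum.elim L L') R + xL i))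
          (Sum.rec (fun j => R j + PGame.mk xl xr xL xR)
            (fun j => PGame.mk (α ⊕ γ) β (Sum.elim L L') R + xR j)) from rfl,
          Misere.wins_def] at h
      rw [show (PGame.mk α β L R + PGame.mk xl xr xL xR) = PGame.mk (α ⊕ xl) (β ⊕ xr)
          (Sum.rec (fun i => L i + PGame.mk xl xr xL xR) (fun i => PGame.mk α β L R + xL i))
          (Sum.rec (fun j => R j + PGame.mk xl xr xL xR) (fun j => PGame.mk α β L R + xR j))
          from rfl, Misere.wins_def]
      rcases h with h | ⟨j, hj⟩
      · exact Or.inl h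
      · rcases j with j | j
        · exact Or.inr ⟨Sum.inl j, hj⟩
        · exact Or.inr ⟨Sum.inr j, fun hw => hj ((IHR j).1 hw)⟩


open Misere in
/-- hand-tying principle for misère play. If `G` is obtained from `H` by
adding extra Left options to an already nonempty set of Left options, then `G ≥ H`
under misère play. -/
theorem hand_tying {α β γ : Type u} (L : α → PGame) (L' : γ → PGame) (R : β → PGame)
    (hα : Nonempty α) :
    ∀ X : PGame, misereOutcome (PGame.mk α β L R + X) ≤
      misereOutcome (PGame.mk (α ⊕ γ) β (Sum.elim L L') R + X) := fun X =>
  Misere.outcome_le (hand_tying' L L' R hα X).1 (hand_tying' L L' R hα X).2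
end

section
/- For every pair of outcome classes (C1, C2) with C1, C2 ∈ {L, R, N, P}, there exists a game G whose normal-play outcome is C1 and whose misère-play outcome is C2. -/
universe u

open SetTheory

namespace Misere

/-! ### Auxiliary concrete games -/

/-- One-option family. -/
def one1 (a : PGame.{u}) : PUnit.{u+1} → PGame.{u} := fun _ => a
/-- Two-option family. -/
def two2 (a b : PGame.{u}) : ULift.{u} Bool → PGame.{u} := fun i => bif i.down then b else a

/-- The zero game. -/
def g0 : PGame.{u} := PGame.mk PEmpty PEmpty PEmpty.elim PEmpty.elim
/-- The game 1 = {0 | }. -/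
def gone : PGame.{u} := PGame.mk PUnit PEmpty (one1 g0) PEmpty.elim
/-- The game -1 = { | 0}. -/
def gm : PGame.{u} := PGame.mk PEmpty PUnit PEmpty.elim (one1 g0)
/-- A = {0, -1 | }. -/
def gA : PGame.{u} := PGame.mk (ULift Bool) PEmpty (two2 g0 gm) PEmpty.elim
/-- B = { | 0, 1}. -/
def gB : PGame.{u} := PGame.mk PEmpty (ULift Bool) PEmpty.elim (two2 g0 gone)

/-- The 16 games realizing each (normal, misère) outcome pair. -/
def gameFor : Outcome → Outcome → PGame.{u}
  | .L, .L => PGame.mk (ULift Bool) PUnit (two2 g0 gm) (one1 gA)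
  | .L, .N => gA
  | .L, .P => PGame.mk PUnit PUnit (one1 g0) (one1 gA)
  | .L, .R => gone
  | .N, .L => PGame.mk (ULift Bool) PUnit (two2 g0 gm) (one1 g0)
  | .N, .N => PGame.mk (ULift Bool) (ULift Bool) (two2 g0 gm) (two2 g0 gone)
  | .N, .P => PGame.mk PUnit PUnit (one1 g0) (one1 g0)
  | .N, .R => PGame.mk PUnit (ULift Bool) (one1 g0) (two2 g0 gone)
  | .P, .L => PGame.mk PEmpty PUnit PEmpty.elim (one1 gA)
  | .P, .N => g0
  | .P, .P => PGame.mk PUnit PUnit (one1 gB) (one1 gA)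
  | .P, .R => PGame.mk PUnit PEmpty (one1 gB) PEmpty.elim
  | .R, .L => gm
  | .R, .N => gB
  | .R, .P => PGame.mk PUnit PUnit (one1 gB) (one1 g0)
  | .R, .R => PGame.mk PUnit (ULift Bool) (one1 gB) (two2 g0 gone)

@[simp] lemma isEmpty_pempty_iff : IsEmpty PEmpty.{u+1} ↔ True := iff_true_intro inferInstance
@[simp] lemma not_isEmpty_punit : IsEmpty PUnit.{u+1} ↔ False := by simp
@[simp] lemma not_isEmpty_ulift_bool : IsEmpty (ULift.{u} Bool) ↔ False := by simp
@[simp] lemma exists_pempty {p : PEmpty.{u+1} → Prop} : (∃ i, p i) ↔ False := by simp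
@[simp] lemma exists_punit {p : PUnit.{u+1} → Prop} : (∃ i, p i) ↔ p PUnit.unit :=
  ⟨fun ⟨_, h⟩ => h, fun h => ⟨_, h⟩⟩
@[simp] lemma exists_ulift_bool {p : ULift.{u} Bool → Prop} :
    (∃ i, p i) ↔ p ⟨false⟩ ∨ p ⟨true⟩ :=
  ⟨fun ⟨⟨b⟩, h⟩ => by cases b; exacts [Or.inl h, Or.inr h],
   fun h => h.elim (⟨_, ·⟩) (⟨_, ·⟩)⟩

@[simp] lemma wins_mk {α β : Type u} {L R} :
    wins (PGame.mk α β L R) =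
      (IsEmpty α ∨ ∃ i, ¬ (wins (L i)).2, IsEmpty β ∨ ∃ j, ¬ (wins (R j)).1) := rfl

@[simp] lemma nwins_mk {α β : Type u} {L R} :
    nwins (PGame.mk α β L R) =
      (∃ i, ¬ (nwins (L i)).2, ∃ j, ¬ (nwins (R j)).1) := rfl

@[simp] lemma one1_apply (a : PGame.{u}) (i) : one1 a i = a := rfl
@[simp] lemma two2_false (a b : PGame.{u}) : two2 a b ⟨false⟩ = a := rfl
@[simp] lemma two2_true (a b : PGame.{u}) : two2 a b ⟨true⟩ = b := rfl

@[simp] lemma wins_g0 : wins g0.{u} = (True, True) := by simp [g0]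
@[simp] lemma nwins_g0 : nwins g0.{u} = (False, False) := by simp [g0]
@[simp] lemma wins_gone : wins gone.{u} = (False, True) := by simp [gone]
@[simp] lemma nwins_gone : nwins gone.{u} = (True, False) := by simp [gone]
@[simp] lemma wins_gm : wins gm.{u} = (True, False) := by simp [gm]
@[simp] lemma nwins_gm : nwins gm.{u} = (False, True) := by simp [gm]
@[simp] lemma wins_gA : wins gA.{u} = (True, True) := by simp [gA]
@[simp] lemma nwins_gA : nwins gA.{u} = (True, False) := by simp [gA]
@[simp] lemma wins_gB : wins gB.{u} = (True, True) := by simp [gB]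
@[simp] lemma nwins_gB : nwins gB.{u} = (False, True) := by simp [gB]

end Misere

open Misere in
/-- every pair of outcome classes is realized as the normal-play and
misère-play outcomes of a single game. -/
theorem all_outcome_pairs_realized (C1 C2 : Outcome) :
    ∃ G : PGame, normalOutcome G = C1 ∧ misereOutcome G = C2 := by
  refine ⟨gameFor C1 C2, ?_, ?_⟩ <;> cases C1 <;> cases C2 <;>
    simp [gameFor, normalOutcome, misereOutcome]
end
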